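/- Let X be a real Banach space, L : X →L[ℝ] X a bounded linear operator, and τ > 0. Then τ·φ₁(τ·L) − τ·exp((τ/2)·L) = ∫_{s∈[0,τ]} ∫_{σ∈[0,s]} ∫_{ξ∈[τ/2,σ]} exp((τ−ξ)·L) ∘ L ∘ L dξ dσ ds + (τ³/4) · exp((τ/2)·L) ∘ φ₂((τ/2)·L) ∘ L ∘ L, where the inner integral over ξ from τ/2 to σ is an oriented (interval) integral. -/

import Mathlib

open MeasureTheory intervalIntegral
open scoped Nat

set_option maxHeartbeats 1000000
set_option synthInstance.maxHeartbeats 200000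

/-- The operator `φ_ℓ(T) = ∑_{k=0}^∞ T^k / (ℓ+k)!` (for `ℓ = 0` this is `exp T`). -/
noncomputable def phi {X : Type*} [NormedAddCommGroup X] [NormedSpace ℝ X] [CompleteSpace X]
    (ℓ : ℕ) (T : X →L[ℝ] X) : X →L[ℝ] X :=
  ∑' k : ℕ, (((ℓ + k)! : ℝ)⁻¹) • T ^ k

section aux

variable {X : Type*} [NormedAddCommGroup X] [NormedSpace ℝ X] [CompleteSpace X]

theorem phi_summable (ℓ : ℕ) (T : X →L[ℝ] X) :
    Summable fun k : ℕ => (((ℓ + k)! : ℝ)⁻¹) • T ^ k := by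
  apply Summable.of_norm_bounded (g := fun k => ‖T‖ ^ k / (k ! : ℝ))
    (Real.summable_pow_div_factorial ‖T‖)
  intro k
  rw [norm_smul ((((ℓ + k)! : ℝ))⁻¹) (T ^ k), norm_inv, Real.norm_natCast, div_eq_inv_mul]
  have h1 : ((ℓ + k)! : ℝ)⁻¹ ≤ (k ! : ℝ)⁻¹ := by
    apply inv_anti₀ (by positivity)
    exact_mod_cast Nat.factorial_le (Nat.le_add_left _ _)
  have h2 : ‖T ^ k‖ ≤ ‖T‖ ^ k := by
    rcases Nat.eq_zero_or_pos k with hk | hk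
    · subst hk; simpa [← ContinuousLinearMap.one_def] using ContinuousLinearMap.norm_id_le
    · exact norm_pow_le' T hk
  exact mul_le_mul h1 h2 (norm_nonneg _) (by positivity)

theorem exp_eq_one_add (T : X →L[ℝ] X) :
    NormedSpace.exp T = 1 + T + phi 2 T * T ^ 2 := by
  have h2 : phi 2 T * T ^ 2 = ∑' k : ℕ, ((k + 2)! : ℝ)⁻¹ • T ^ (k + 2) := by
    rw [phi, ← (phi_summable 2 T).tsum_mul_right (T ^ 2)]
    congr 1; funext k
    rw [smul_mul_assoc, ← pow_add, add_comm 2 k]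
  have hs : Summable fun n : ℕ => ((n)! : ℝ)⁻¹ • T ^ n := by
    simpa using phi_summable 0 T
  have hs1 : Summable fun n : ℕ => (((n + 1))! : ℝ)⁻¹ • T ^ (n + 1) :=
    (summable_nat_add_iff 1).2 hs
  rw [NormedSpace.exp_eq_tsum ℝ]
  beta_reduce
  rw [Summable.tsum_eq_zero_add hs, Summable.tsum_eq_zero_add hs1]
  simp only [Nat.factorial_zero, Nat.factorial_one, Nat.cast_one, inv_one, pow_zero, one_smul,
    pow_one]
  rw [h2]
  norm_num [add_assoc]

theorem tau_phi_one (τ : ℝ) (L : X →L[ℝ] X) :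
    τ • phi 1 (τ • L) = ∑' n : ℕ, ((n + 1)! : ℝ)⁻¹ • (τ ^ (n + 1) • L ^ n) := by
  rw [phi, ← Summable.tsum_const_smul τ (phi_summable 1 (τ • L))]
  congr 1; funext k
  rw [smul_pow, smul_comm τ, smul_smul τ, add_comm 1 k, pow_succ, mul_comm (τ ^ k) τ]

theorem integral_exp_smul (τ : ℝ) (hτ : 0 ≤ τ) (L : X →L[ℝ] X) :
    (∫ u in (0:ℝ)..τ, NormedSpace.exp (u • L)) = τ • phi 1 (τ • L) := by
  set R : ℝ := |τ| + 1 with hR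
  have hRpos : (0:ℝ) < R := by positivity
  have hus : Summable (fun n : ℕ => (R * ‖L‖) ^ n / (n)!) :=
    Real.summable_pow_div_factorial _
  have hderiv : ∀ (n : ℕ) (y : ℝ), y ∈ Metric.ball (0:ℝ) R →
      HasDerivAt (fun t : ℝ => ((n + 1)! : ℝ)⁻¹ • (t ^ (n + 1) • L ^ n))
        (((n)! : ℝ)⁻¹ • (y ^ n • L ^ n)) y := by
    intro n y _
    have h1 : HasDerivAt (fun t : ℝ => t ^ (n + 1) • L ^ n)
        ((((n:ℝ) + 1) * y ^ n) • L ^ n) y := by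
      have := (hasDerivAt_pow (n + 1) y).smul_const (L ^ n)
      simpa using this
    have h2 := h1.const_smul (((n + 1)! : ℝ)⁻¹)
    convert h2 using 1
    iterate 4 rfl
    rw [smul_smul, smul_smul]
    congr 1
    rw [Nat.factorial_succ]
    have hf : ((n)! : ℝ) ≠ 0 := by positivity
    push_cast
    field_simp
  have hbound : ∀ (n : ℕ) (y : ℝ), y ∈ Metric.ball (0:ℝ) R →
      ‖((n)! : ℝ)⁻¹ • (y ^ n • L ^ n)‖ ≤ (R * ‖L‖) ^ n / (n)! := by
    intro n y hy
    rw [Metric.mem_ball, Real.dist_eq, sub_zero] at hy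
    rw [norm_smul (((n)! : ℝ)⁻¹) (y ^ n • L ^ n), norm_smul (y ^ n) (L ^ n), norm_inv, Real.norm_natCast,
      div_eq_inv_mul, mul_pow]
    have h2 : ‖L ^ n‖ ≤ ‖L‖ ^ n := by
      rcases Nat.eq_zero_or_pos n with hn | hn
      · subst hn; simpa [← ContinuousLinearMap.one_def] using ContinuousLinearMap.norm_id_le
      · exact norm_pow_le' L hn
    have h3 : ‖y ^ n‖ ≤ R ^ n := by
      rw [Real.norm_eq_abs, abs_pow]
      exact pow_le_pow_left₀ (abs_nonneg y) hy.le n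
    gcongr
  have hg0 : Summable (fun n : ℕ => ((n + 1)! : ℝ)⁻¹ • ((0:ℝ) ^ (n + 1) • L ^ n)) := by
    have : (fun n : ℕ => ((n + 1)! : ℝ)⁻¹ • ((0:ℝ) ^ (n + 1) • L ^ n)) = fun _ => 0 := by
      funext n; simp [zero_pow (Nat.succ_ne_zero n)]
    rw [this]; exact summable_zero
  have key : ∀ y : ℝ, y ∈ Metric.ball (0:ℝ) R →
      HasDerivAt (fun z : ℝ => ∑' n : ℕ, ((n + 1)! : ℝ)⁻¹ • (z ^ (n + 1) • L ^ n))
        (NormedSpace.exp (y • L)) y := by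
    intro y hy
    have h := hasDerivAt_tsum_of_isPreconnected hus Metric.isOpen_ball
      (convex_ball (0:ℝ) R).isPreconnected hderiv hbound
      (Metric.mem_ball_self hRpos) hg0 hy
    convert h using 1
    iterate 3 rfl
    rw [NormedSpace.exp_eq_tsum ℝ]
    beta_reduce
    congr 1; funext n
    rw [smul_pow]
  have hexp_cont : Continuous fun u : ℝ => NormedSpace.exp (u • L) :=
    (letI : NormedAlgebra ℚ (X →L[ℝ] X) := .restrictScalars ℚ ℝ _; NormedSpace.exp_continuous).comp (continuous_id.smul continuous_const)
  have hsub : Set.uIcc (0:ℝ) τ ⊆ Metric.ball (0:ℝ) R := by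
    rw [Set.uIcc_of_le hτ]
    intro x hx
    rw [Metric.mem_ball, Real.dist_eq, sub_zero]
    rw [abs_of_nonneg hx.1]
    calc x ≤ τ := hx.2
    _ ≤ |τ| := le_abs_self τ
    _ < R := by rw [hR]; linarith
  have hFTC := integral_eq_sub_of_hasDerivAt (fun x hx => key x (hsub hx))
    (hexp_cont.intervalIntegrable 0 τ)
  rw [hFTC, tau_phi_one]
  have h0 : (∑' n : ℕ, ((n + 1)! : ℝ)⁻¹ • ((0:ℝ) ^ (n + 1) • L ^ n)) = 0 := by
    have : (fun n : ℕ => ((n + 1)! : ℝ)⁻¹ • ((0:ℝ) ^ (n + 1) • L ^ n)) = fun _ => 0 := by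
      funext n; simp [zero_pow (Nat.succ_ne_zero n)]
    rw [this, tsum_zero]
  rw [h0, sub_zero]

theorem hasDerivAt_exp_sub (L : X →L[ℝ] X) (τ ξ : ℝ) :
    HasDerivAt (fun x : ℝ => NormedSpace.exp ((τ - x) • L))
      (-(NormedSpace.exp ((τ - ξ) • L) * L)) ξ := by
  have h1 : HasDerivAt (fun u : ℝ => NormedSpace.exp (u • L))
      (NormedSpace.exp ((τ - ξ) • L) * L) (τ - ξ) := hasDerivAt_exp_smul_const L (τ - ξ)
  have h2 : HasDerivAt (fun x : ℝ => τ - x) (-1) ξ := by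
    simpa using (hasDerivAt_id ξ).const_sub τ
  have h3 := h1.scomp ξ h2
  simpa [Function.comp_def] using h3

theorem exp_cont_aux (L : X →L[ℝ] X) (τ : ℝ) :
    Continuous fun ξ : ℝ => NormedSpace.exp ((τ - ξ) • L) :=
  (letI : NormedAlgebra ℚ (X →L[ℝ] X) := .restrictScalars ℚ ℝ _; NormedSpace.exp_continuous).comp ((continuous_const.sub continuous_id).smul continuous_const)

end aux

theorem stmt9 {X : Type*} [NormedAddCommGroup X] [NormedSpace ℝ X] [CompleteSpace X]
    (L : X →L[ℝ] X) (τ : ℝ) (hτ : 0 < τ) :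
    τ • phi 1 (τ • L) - τ • NormedSpace.exp ((τ/2) • L) =
      (∫ s in (0:ℝ)..τ, ∫ σ in (0:ℝ)..s, ∫ ξ in (τ/2)..σ,
          (NormedSpace.exp ((τ - ξ) • L)).comp (L.comp L))
      + (τ^3/4) • ((NormedSpace.exp ((τ/2) • L)).comp
          ((phi 2 ((τ/2) • L)).comp (L.comp L))) := by
  simp only [← ContinuousLinearMap.mul_def]
  set E := NormedSpace.exp ((τ/2) • L) with hE
  have hhalf : τ - τ/2 = τ/2 := by ring
  have inner : ∀ σ : ℝ, (∫ ξ in (τ/2)..σ, NormedSpace.exp ((τ - ξ) • L) * (L * L))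
      = E * L - NormedSpace.exp ((τ - σ) • L) * L := by
    intro σ
    have hd : ∀ ξ ∈ Set.uIcc (τ/2) σ,
        HasDerivAt (fun x : ℝ => -(NormedSpace.exp ((τ - x) • L) * L))
          (NormedSpace.exp ((τ - ξ) • L) * (L * L)) ξ := by
      intro ξ _
      have h := ((hasDerivAt_exp_sub L τ ξ).mul_const L).neg
      simpa [mul_assoc, Pi.neg_def] using h
    rw [integral_eq_sub_of_hasDerivAt hd
      (((exp_cont_aux L τ).mul continuous_const).intervalIntegrable _ _)]
    rw [hhalf, ← hE, neg_sub_neg]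
  have middle : ∀ s : ℝ, (∫ σ in (0:ℝ)..s, (E * L - NormedSpace.exp ((τ - σ) • L) * L))
      = s • (E * L) + NormedSpace.exp ((τ - s) • L) - NormedSpace.exp (τ • L) := by
    intro s
    have hd : ∀ σ ∈ Set.uIcc (0:ℝ) s,
        HasDerivAt (fun x : ℝ => x • (E * L) + NormedSpace.exp ((τ - x) • L))
          (E * L - NormedSpace.exp ((τ - σ) • L) * L) σ := by
      intro σ _
      have h1 : HasDerivAt (fun x : ℝ => x • (E * L)) (E * L) σ := by
        simpa using (hasDerivAt_id σ).smul_const (E * L)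
      have h := h1.add (hasDerivAt_exp_sub L τ σ)
      simpa [sub_eq_add_neg, Pi.add_def] using h
    rw [integral_eq_sub_of_hasDerivAt hd
      ((continuous_const.sub ((exp_cont_aux L τ).mul continuous_const)).intervalIntegrable _ _)]
    simp only [zero_smul, zero_add, sub_zero]
  have houter : (∫ s in (0:ℝ)..τ, ∫ σ in (0:ℝ)..s, ∫ ξ in (τ/2)..σ,
        NormedSpace.exp ((τ - ξ) • L) * (L * L))
      = (τ^2/2) • (E * L) + τ • phi 1 (τ • L) - τ • NormedSpace.exp (τ • L) := by
    simp only [inner, middle]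
    have i1 : IntervalIntegrable (fun s : ℝ => s • (E * L)) volume 0 τ :=
      (continuous_id.smul continuous_const).intervalIntegrable _ _
    have i2 : IntervalIntegrable (fun s : ℝ => NormedSpace.exp ((τ - s) • L)) volume 0 τ :=
      (exp_cont_aux L τ).intervalIntegrable _ _
    have i3 : IntervalIntegrable (fun _ : ℝ => NormedSpace.exp (τ • L)) volume 0 τ :=
      intervalIntegrable_const
    rw [integral_sub (i1.add i2) i3, integral_add i1 i2, intervalIntegral.integral_smul_const, integral_id,
      intervalIntegral.integral_const]
    have hsub : (∫ s in (0:ℝ)..τ, NormedSpace.exp ((τ - s) • L)) = τ • phi 1 (τ • L) := by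
      rw [intervalIntegral.integral_comp_sub_left (fun u : ℝ => NormedSpace.exp (u • L)) τ]
      simp only [sub_self, sub_zero]
      exact integral_exp_smul τ hτ.le L
    rw [hsub]
    norm_num
  rw [houter]
  have hexp2 : NormedSpace.exp (τ • L) = E * E := by
    rw [hE, ← (letI : NormedAlgebra ℚ (X →L[ℝ] X) := .restrictScalars ℚ ℝ _; NormedSpace.exp_add_of_commute (Commute.refl ((τ/2) • L))), ← add_smul]
    norm_num
  have hEE : E * E = E + (τ/2) • (E * L)
      + (τ/2)^2 • (E * (phi 2 ((τ/2) • L) * (L * L))) := by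
    calc E * E = E * (1 + (τ/2) • L + phi 2 ((τ/2) • L) * ((τ/2) • L) ^ 2) := by
          nth_rewrite 2 [hE]; rw [exp_eq_one_add]
    _ = E + (τ/2) • (E * L) + (τ/2)^2 • (E * (phi 2 ((τ/2) • L) * (L * L))) := by
          rw [smul_pow, pow_two L, mul_add, mul_add, mul_one, mul_smul_comm,
            mul_smul_comm, mul_smul_comm]
  rw [hexp2, hEE]
  module
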